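/- (Proposition 3, scalar form) Let τ > 0, λ > 0, N > 0 and p, c ∈ ℝ. The function q ↦ (q − p)²/(2τ) + (N/λ)·e^{λ(q − c) − 1} attains its minimum over ℝ at a unique point q*, and q* is characterized by the equation λ(p − q*)·e^{λ(p − q*)} = λτN·e^{λ(p − c) − 1}; equivalently q* = p − (1/λ)·W(λτN·e^{λ(p − c) − 1}), where W(z) denotes the unique real solution w ≥ 0 of w·e^w = z for z ≥ 0. -/

import Mathlib

/-- (Proposition 3, scalar form) For `τ, λ, N > 0` and `p, c ∈ ℝ`, the function
`q ↦ (q − p)²/(2τ) + (N/λ)·e^{λ(q − c) − 1}` attains its minimum over `ℝ` at a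
unique point `q*`, characterized by
`λ(p − q*)·e^{λ(p − q*)} = λτN·e^{λ(p − c) − 1}`; equivalently
`q* = p − (1/λ)·W(λτN·e^{λ(p − c) − 1})` where `W(z)` is the unique `w ≥ 0`
with `w·e^w = z`. -/
theorem prox_sinkhorn_scalar (tau lam N p c : ℝ)
    (htau : 0 < tau) (hlam : 0 < lam) (hN : 0 < N) :
    (∃! q : ℝ, ∀ q' : ℝ,
        (q - p) ^ 2 / (2 * tau) + (N / lam) * Real.exp (lam * (q - c) - 1)
          ≤ (q' - p) ^ 2 / (2 * tau) + (N / lam) * Real.exp (lam * (q' - c) - 1)) ∧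
    (∀ q : ℝ,
      (∀ q' : ℝ,
        (q - p) ^ 2 / (2 * tau) + (N / lam) * Real.exp (lam * (q - c) - 1)
          ≤ (q' - p) ^ 2 / (2 * tau) + (N / lam) * Real.exp (lam * (q' - c) - 1)) →
      lam * (p - q) * Real.exp (lam * (p - q))
          = lam * tau * N * Real.exp (lam * (p - c) - 1) ∧
      ∃ w : ℝ, 0 ≤ w ∧
        w * Real.exp w = lam * tau * N * Real.exp (lam * (p - c) - 1) ∧
        q = p - (1 / lam) * w) := by
  set z : ℝ := lam * tau * N * Real.exp (lam * (p - c) - 1) with hzdef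
  have hz0 : 0 < z := by positivity
  -- Lambert W existence
  obtain ⟨w, hw_mem, hwz⟩ : ∃ w ∈ Set.Icc (0:ℝ) z, w * Real.exp w = z := by
    have hcont : ContinuousOn (fun w : ℝ => w * Real.exp w) (Set.Icc 0 z) := by
      fun_prop
    have hsub := intermediate_value_Icc (le_of_lt hz0) hcont
    have hmem : z ∈ Set.Icc ((0:ℝ) * Real.exp 0) (z * Real.exp z) := by
      constructor
      · simpa using hz0.le
      · nlinarith [Real.one_le_exp hz0.le]
    obtain ⟨w, hw, hwe⟩ := hsub hmem
    exact ⟨w, hw, hwe⟩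
  have hw0 : 0 ≤ w := hw_mem.1
  set q₀ : ℝ := p - (1 / lam) * w with hq₀
  have hexp₀ : lam * (q₀ - c) - 1 = (lam * (p - c) - 1) - w := by
    rw [hq₀, mul_sub, mul_sub, ← mul_assoc, mul_one_div_cancel hlam.ne']; ring
  have hkey : N * Real.exp (lam * (q₀ - c) - 1) = w / (lam * tau) := by
    rw [hexp₀, Real.exp_sub]
    have := Real.exp_ne_zero w
    field_simp
    nlinarith [hwz, Real.exp_pos w]
  -- main inequality with quadratic slack
  have hmain : ∀ q' : ℝ,
      (q₀ - p) ^ 2 / (2 * tau) + (N / lam) * Real.exp (lam * (q₀ - c) - 1)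
        + (q' - q₀) ^ 2 / (2 * tau)
        ≤ (q' - p) ^ 2 / (2 * tau) + (N / lam) * Real.exp (lam * (q' - c) - 1) := by
    intro q'
    have hE : Real.exp (lam * (q₀ - c) - 1) * (1 + lam * (q' - q₀))
        ≤ Real.exp (lam * (q' - c) - 1) := by
      have h1 := Real.add_one_le_exp (lam * (q' - q₀))
      have h2 : Real.exp (lam * (q' - c) - 1)
          = Real.exp (lam * (q₀ - c) - 1) * Real.exp (lam * (q' - q₀)) := by
        rw [← Real.exp_add]; ring_nf
      nlinarith [Real.exp_pos (lam * (q₀ - c) - 1)]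
    have hq0p : q₀ - p = -(w / lam) := by rw [hq₀]; ring
    have hNl : 0 < N / lam := by positivity
    -- use hkey and hE
    have hE' : (N / lam) * (Real.exp (lam * (q₀ - c) - 1) * (1 + lam * (q' - q₀)))
        ≤ (N / lam) * Real.exp (lam * (q' - c) - 1) :=
      mul_le_mul_of_nonneg_left hE hNl.le
    have hexpand : (N / lam) * (Real.exp (lam * (q₀ - c) - 1) * (1 + lam * (q' - q₀)))
        = (N / lam) * Real.exp (lam * (q₀ - c) - 1)
          + (w / (lam * tau)) * (q' - q₀) := by
      rw [← hkey]
      field_simp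
    rw [hexpand] at hE'
    have hd : q' - q₀ = (q' - p) + w / lam := by
      have h0 : q₀ = p - w / lam := by rw [hq₀]; ring
      rw [h0]; ring
    have hsq : (q' - p) ^ 2 / (2 * tau)
        = (q₀ - p) ^ 2 / (2 * tau) + (q' - q₀) ^ 2 / (2 * tau)
          - (w / (lam * tau)) * (q' - q₀) := by
      rw [hq0p, hd]
      field_simp
      ring
    linarith
  have hmin : ∀ q' : ℝ,
      (q₀ - p) ^ 2 / (2 * tau) + (N / lam) * Real.exp (lam * (q₀ - c) - 1)
        ≤ (q' - p) ^ 2 / (2 * tau) + (N / lam) * Real.exp (lam * (q' - c) - 1) := by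
    intro q'
    have h1 := hmain q'
    have h2 : 0 ≤ (q' - q₀) ^ 2 / (2 * tau) := by positivity
    linarith
  have huniq : ∀ q : ℝ,
      (∀ q' : ℝ,
        (q - p) ^ 2 / (2 * tau) + (N / lam) * Real.exp (lam * (q - c) - 1)
          ≤ (q' - p) ^ 2 / (2 * tau) + (N / lam) * Real.exp (lam * (q' - c) - 1)) →
      q = q₀ := by
    intro q hq
    have h1 := hmain q
    have h2 := hq q₀
    have : (q - q₀) ^ 2 / (2 * tau) ≤ 0 := by linarith
    have hsq : (q - q₀) ^ 2 ≤ 0 := by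
      by_contra h
      push_neg at h
      have : 0 < (q - q₀) ^ 2 / (2 * tau) := by positivity
      linarith
    have : q - q₀ = 0 := by nlinarith [sq_nonneg (q - q₀)]
    linarith
  constructor
  · exact ⟨q₀, hmin, huniq⟩
  · intro q hq
    have hqq₀ : q = q₀ := huniq q hq
    have hpq : lam * (p - q) = w := by
      rw [hqq₀, hq₀]; field_simp; ring
    constructor
    · rw [hpq, hwz]
    · exact ⟨w, hw0, hwz, by rw [hqq₀]⟩
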